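/- Suppose Φ(T) = c U T⁺ V for all T in a unital standard *-operator algebra A, where c ≠ 0 and U, V are unitary operators of the Hilbert space mapping D onto D. Then Φ does not satisfy the property that A⁺B = 0 implies Φ(A)⁺Φ(B) = 0; i.e. there exist A, B ∈ A with A⁺B = 0 but Φ(A)⁺Φ(B) ≠ 0. -/

import Mathlib

open scoped InnerProductSpace

noncomputable def rankOne {H : Type*} [NormedAddCommGroup H] [InnerProductSpace ℂ H]
    (D : Submodule ℂ H) (ψ φ : D) : D →ₗ[ℂ] D where
  toFun χ := (⟪(φ : H), (χ : H)⟫_ℂ) • ψ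
  map_add' x y := by
    simp [inner_add_right, add_smul]
  map_smul' c x := by
    simp [inner_smul_right, smul_smul]

def IsFiniteRankOp {H : Type*} [NormedAddCommGroup H] [InnerProductSpace ℂ H]
    (D : Submodule ℂ H) (F : D →ₗ[ℂ] D) : Prop :=
  F ∈ Submodule.span ℂ (Set.range fun p : D × D => rankOne D p.1 p.2)

def IsFormalAdjoint {H : Type*} [NormedAddCommGroup H] [InnerProductSpace ℂ H]
    (D : Submodule ℂ H) (A S : D →ₗ[ℂ] D) : Prop :=
  ∀ x y : D, ⟪((A x : D) : H), (y : H)⟫_ℂ = ⟪(x : H), ((S y : D) : H)⟫_ℂ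

def IsUnitaryOn {H : Type*} [NormedAddCommGroup H] [InnerProductSpace ℂ H]
    (D : Submodule ℂ H) (U : D →ₗ[ℂ] D) : Prop :=
  Function.Bijective U ∧
    ∀ x y : D, ⟪((U x : D) : H), ((U y : D) : H)⟫_ℂ = ⟪(x : H), (y : H)⟫_ℂ

def IsRankOneOp {H : Type*} [NormedAddCommGroup H] [InnerProductSpace ℂ H]
    (D : Submodule ℂ H) (F : D →ₗ[ℂ] D) : Prop :=
  ∃ ψ φ : D, ψ ≠ 0 ∧ φ ≠ 0 ∧ F = rankOne D ψ φ

section Aux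

variable {H : Type*} [NormedAddCommGroup H] [InnerProductSpace ℂ H]

lemma rankOne_apply (D : Submodule ℂ H) (ψ φ χ : D) :
    rankOne D ψ φ χ = (⟪(φ : H), (χ : H)⟫_ℂ) • ψ := rfl

/-- existence of two orthogonal nonzero vectors in a dense subspace when rank ≥ 2 -/
lemma exists_orth_pair (D : Submodule ℂ H) (hD : Dense (D : Set H))
    (hdim : 2 ≤ Module.rank ℂ H) :
    ∃ ψ₁ ψ₂ : D, ψ₁ ≠ 0 ∧ ψ₂ ≠ 0 ∧ ⟪(ψ₁ : H), (ψ₂ : H)⟫_ℂ = 0 := by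
  have key : ∀ v : H, ∃ w : D, (w : H) ∉ Submodule.span ℂ {v} := by
    intro v
    by_contra h
    push_neg at h
    have hsub : (D : Set H) ⊆ (Submodule.span ℂ {v} : Set H) := by
      rintro x hx
      exact h ⟨x, hx⟩
    have hclosed : IsClosed ((Submodule.span ℂ {v} : Submodule ℂ H) : Set H) :=
      (Submodule.span ℂ {v}).closed_of_finiteDimensional
    have htop : (Submodule.span ℂ {v} : Submodule ℂ H) = ⊤ := by
      rw [Submodule.eq_top_iff']
      intro x
      have : x ∈ closure (D : Set H) := by rw [hD.closure_eq]; trivial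
      exact (closure_minimal hsub hclosed) this
    have h1 : Module.rank ℂ H ≤ 1 := by
      have := rank_span_le (R := ℂ) ({v} : Set H)
      rw [htop] at this
      simpa using (rank_top ℂ H ▸ this).trans (by simp)
    exact absurd (hdim.trans h1) (by norm_num)
  obtain ⟨ψ₁, hψ₁⟩ := key 0
  have hψ₁0 : ψ₁ ≠ 0 := by
    rintro rfl
    exact hψ₁ (by simp)
  obtain ⟨w, hw⟩ := key (ψ₁ : H)
  have hψ₁H : (ψ₁ : H) ≠ 0 := fun h => hψ₁0 (Subtype.coe_injective (by simpa using h))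
  have hinner : ⟪(ψ₁ : H), (ψ₁ : H)⟫_ℂ ≠ 0 := inner_self_ne_zero.2 hψ₁H
  set t : ℂ := ⟪(ψ₁ : H), (w : H)⟫_ℂ / ⟪(ψ₁ : H), (ψ₁ : H)⟫_ℂ with ht
  refine ⟨ψ₁, w - t • ψ₁, hψ₁0, ?_, ?_⟩
  · intro h
    apply hw
    have : w = t • ψ₁ := by rwa [sub_eq_zero] at h
    rw [this]
    exact Submodule.smul_mem _ _ (Submodule.mem_span_singleton_self _)
  · push_cast
    rw [inner_sub_right, inner_smul_right, ht, div_mul_cancel₀ _ hinner, sub_self]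

end Aux
section Aux2

variable {H : Type*} [NormedAddCommGroup H] [InnerProductSpace ℂ H]

lemma isFormalAdjoint_rankOne (D : Submodule ℂ H) (ψ φ : D) :
    IsFormalAdjoint D (rankOne D ψ φ) (rankOne D φ ψ) := by
  intro x y
  simp only [rankOne_apply, Submodule.coe_smul, inner_smul_left, inner_smul_right,
    inner_conj_symm]
  ring

lemma formalAdjoint_unique (D : Submodule ℂ H) (hD : Dense (D : Set H))
    {A S S' : D →ₗ[ℂ] D} (hS : IsFormalAdjoint D A S) (hS' : IsFormalAdjoint D A S') :
    S = S' := by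
  refine LinearMap.ext fun y => Subtype.coe_injective ?_
  apply hD.eq_of_inner_right ℂ
  intro v hv
  exact (hS ⟨v, hv⟩ y).symm.trans (hS' ⟨v, hv⟩ y)

end Aux2
theorem stmt10 {H : Type*} [NormedAddCommGroup H] [InnerProductSpace ℂ H]
    (D : Submodule ℂ H) (hD : Dense (D : Set H))
    (hdim : 2 ≤ Module.rank ℂ H)
    (𝒜 : Subalgebra ℂ (D →ₗ[ℂ] D)) (hstd : ∀ ψ φ : D, rankOne D ψ φ ∈ 𝒜)
    (dag : (D →ₗ[ℂ] D) → (D →ₗ[ℂ] D))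
    (hdag : ∀ A ∈ 𝒜, dag A ∈ 𝒜 ∧ IsFormalAdjoint D A (dag A))
    (U V : D →ₗ[ℂ] D) (hU : IsUnitaryOn D U) (hV : IsUnitaryOn D V)
    (c : ℂ) (hc : c ≠ 0)
    (Φ : (D →ₗ[ℂ] D) → (D →ₗ[ℂ] D))
    (hΦ : ∀ A ∈ 𝒜, Φ A = c • (U ∘ₗ dag A ∘ₗ V))
    (hΦmem : ∀ A ∈ 𝒜, Φ A ∈ 𝒜) :
    ∃ A ∈ 𝒜, ∃ B ∈ 𝒜, dag A ∘ₗ B = 0 ∧ dag (Φ A) ∘ₗ Φ B ≠ 0 := by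

  obtain ⟨ψ₁, ψ₂, h1, h2, horth⟩ := exists_orth_pair D hD hdim
  have h1H : (ψ₁ : H) ≠ 0 := fun h => h1 (Subtype.coe_injective (by simpa using h))
  have h2H : (ψ₂ : H) ≠ 0 := fun h => h2 (Subtype.coe_injective (by simpa using h))
  set r₁ : ℂ := ⟪(ψ₁ : H), (ψ₁ : H)⟫_ℂ with hr₁
  set r₂ : ℂ := ⟪(ψ₂ : H), (ψ₂ : H)⟫_ℂ with hr₂
  have hr₁0 : r₁ ≠ 0 := inner_self_ne_zero.2 h1H
  have hr₂0 : r₂ ≠ 0 := inner_self_ne_zero.2 h2H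
  set A := rankOne D ψ₁ ψ₁ with hAdef
  set B := rankOne D ψ₂ ψ₁ with hBdef
  have hA : A ∈ 𝒜 := hstd _ _
  have hB : B ∈ 𝒜 := hstd _ _
  have dagA : dag A = rankOne D ψ₁ ψ₁ :=
    formalAdjoint_unique D hD (hdag A hA).2 (isFormalAdjoint_rankOne D ψ₁ ψ₁)
  have dagB : dag B = rankOne D ψ₁ ψ₂ :=
    formalAdjoint_unique D hD (hdag B hB).2 (isFormalAdjoint_rankOne D ψ₂ ψ₁)
  refine ⟨A, hA, B, hB, ?_, ?_⟩
  · ext z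
    simp [dagA, hBdef, rankOne_apply, inner_smul_right, horth]
  · intro h0
    obtain ⟨x, hx⟩ := hV.1.2 ψ₁
    obtain ⟨y, hy⟩ := hV.1.2 ψ₂
    have e1 : Φ A x = (c * r₁) • U ψ₁ := by
      rw [hΦ A hA]
      simp [dagA, hx, rankOne_apply, mul_smul, hr₁]
    have e2 : Φ B y = (c * r₂) • U ψ₁ := by
      rw [hΦ B hB]
      simp [dagB, hy, rankOne_apply, mul_smul, hr₂]
    have hzero : dag (Φ A) (Φ B y) = 0 := DFunLike.congr_fun h0 y
    have hinner : ⟪((Φ A x : D) : H), ((Φ B y : D) : H)⟫_ℂ = 0 := by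
      rw [(hdag _ (hΦmem A hA)).2 x (Φ B y), hzero]
      simp
    rw [e1, e2] at hinner
    simp only [Submodule.coe_smul, inner_smul_left, inner_smul_right] at hinner
    rw [hU.2 ψ₁ ψ₁, ← hr₁] at hinner
    have hcr : (starRingEnd ℂ) (c * r₁) ≠ 0 := by
      simpa using mul_ne_zero hc hr₁0
    exact (mul_ne_zero (mul_ne_zero hc hr₂0) (mul_ne_zero hcr hr₁0)) hinner
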